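/- If G = (X,Y;E) is a bipartite graph with Δ(G) = 6 in which the degree of every vertex of X belongs to the set {1, 2, 4, 5, 6}, then χ'_int(G,X) ≤ 10; that is, G has an X-interval coloring using at most 10 colors. -/

import Mathlib

open Finset

universe u
variable {α β : Type u}

theorem card_filter_sum' [Fintype α] [Fintype β] (P : α ⊕ β → Prop) [DecidablePred P] :
    #(univ.filter P) = #(univ.filter fun a => P (Sum.inl a)) + #(univ.filter fun b => P (Sum.inr b)) := by
  rw [← Finset.card_toLeft_add_card_toRight (u := univ.filter P)]
  congr 1
  · congr 1; ext a; simp [mem_toLeft]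
  · congr 1; ext b; simp [mem_toRight]

theorem card_filter_fin_lt (k c : ℕ) (h : c ≤ k) :
    #(univ.filter fun i : Fin k => (i:ℕ) < c) = c := by
  rw [show (univ.filter fun i : Fin k => (i:ℕ) < c) = (univ : Finset (Fin c)).image (Fin.castLE h) by
    ext i
    simp only [mem_filter, mem_univ, true_and, mem_image]
    constructor
    · intro hi; exact ⟨⟨i.1, hi⟩, by simp [Fin.ext_iff, Fin.castLE]⟩
    · rintro ⟨j, hj⟩; have := j.2; simp [Fin.ext_iff, Fin.castLE] at hj; omega]
  rw [Finset.card_image_of_injective _ (Fin.castLE_injective h), Finset.card_univ, Fintype.card_fin]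

theorem card_filter_subtype [Fintype α] (q : α → Prop) [DecidablePred q] (r : α → Prop)
    [DecidablePred r] :
    #(univ.filter fun x : {a // q a} => r x.val) = #(univ.filter fun a => q a ∧ r a) := by
  classical
  apply Finset.card_bij (fun x _ => x.val)
  · intro x hx; simp at hx ⊢; exact ⟨x.2, hx⟩
  · intro x _ y _ h; exact Subtype.ext h
  · intro a ha; simp at ha; exact ⟨⟨a, ha.1⟩, by simp [ha.2]⟩

section Konig
variable {V : Type u} [Fintype V] [DecidableEq V]

/-- fiber count of a map at a point -/
def mdeg {E : Type u} [Fintype E] (p : E → V) (v : V) : ℕ :=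
  #(univ.filter fun e => p e = v)

theorem sum_mdeg {E : Type u} [Fintype E] (p : E → V) :
    ∑ v, mdeg p v = Fintype.card E := by
  classical
  rw [← Finset.card_univ, Finset.card_eq_sum_card_fiberwise (f := p) (t := univ)
    (fun e _ => mem_univ (p e))]
  rfl

/-- König edge coloring, regular case. -/
theorem konigReg (k : ℕ) : ∀ (E : Type u) [Fintype E] (p m : E → V),
    (∀ v, mdeg p v = k) → (∀ v, mdeg m v = k) →
    ∃ κ : E → Fin k, ∀ e f, e ≠ f → (p e = p f ∨ m e = m f) → κ e ≠ κ f := by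
  classical
  induction k with
  | zero =>
    intro E _ p m hp hm
    have : IsEmpty E := by
      constructor; intro e
      have h := hp (p e)
      rw [mdeg, card_eq_zero] at h
      exact absurd (h ▸ mem_filter.mpr ⟨mem_univ e, rfl⟩) (notMem_empty e)
    exact ⟨fun e => isEmptyElim e, fun e => isEmptyElim e⟩
  | succ k ih =>
    intro E _ p m hp hm
    set t : V → Finset V := fun v => ((univ.filter fun e => p e = v)).image m with ht
    have hcount : ∀ (s : Finset V) (q : E → V), (∀ v, mdeg q v = k + 1) →
        #(univ.filter fun e => q e ∈ s) = #s * (k+1) := by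
      intro s q hq
      rw [Finset.card_eq_sum_card_fiberwise (f := q) (t := s)
        (by intro e he; simpa using (mem_filter.mp he).2)]
      rw [Finset.sum_congr rfl (g := fun _ => k + 1) (fun v hv => ?_), Finset.sum_const,
        smul_eq_mul]
      rw [filter_filter]
      rw [show (univ.filter fun e => q e ∈ s ∧ q e = v) = univ.filter fun e => q e = v by
        ext e; simp only [mem_filter, mem_univ, true_and, and_iff_right_iff_imp]
        intro h; rw [h]; exact hv]
      exact hq v
    have hall : ∀ s : Finset V, #s ≤ #(s.biUnion t) := by
      intro s
      have h2 : (univ.filter fun e => p e ∈ s) ⊆ (univ.filter fun e => m e ∈ s.biUnion t) := by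
        intro e he
        simp only [mem_filter, mem_univ, true_and] at he ⊢
        exact mem_biUnion.mpr ⟨p e, he, mem_image.mpr ⟨e, mem_filter.mpr ⟨mem_univ e, rfl⟩, rfl⟩⟩
      have h3 := card_le_card h2
      rw [hcount s p hp, hcount (s.biUnion t) m hm] at h3
      exact Nat.le_of_mul_le_mul_right h3 (Nat.succ_pos k)
    obtain ⟨f, hfinj, hft⟩ := (Finset.all_card_le_biUnion_card_iff_exists_injective t).mp hall
    have hsel : ∀ v, ∃ e, p e = v ∧ m e = f v := by
      intro v
      have := hft v
      rw [ht] at this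
      simp only [mem_image, mem_filter, mem_univ, true_and] at this
      obtain ⟨e, he1, he2⟩ := this
      exact ⟨e, he1, he2⟩
    choose sel hselp hselm using hsel
    have hfbij : Function.Bijective f := Finite.injective_iff_bijective.mp hfinj
    set g := (Equiv.ofBijective f hfbij).symm with hg
    have hfg : ∀ v, f (g v) = v := fun v => (Equiv.ofBijective f hfbij).apply_symm_apply v
    set M : Finset E := univ.image sel with hM
    have hselinj : Function.Injective sel := fun v w h => by
      rw [← hselp v, ← hselp w, h]
    have hMp : ∀ v, (univ.filter fun e => p e = v ∧ e ∈ M) = {sel v} := by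
      intro v; ext e
      simp only [mem_filter, mem_univ, true_and, hM, mem_image, mem_singleton]
      constructor
      · rintro ⟨hpe, w, -, rfl⟩
        have hwv : w = v := by rw [← hselp w, hpe]
        rw [hwv]
      · rintro rfl; exact ⟨hselp v, v, rfl⟩
    have hMm : ∀ v, (univ.filter fun e => m e = v ∧ e ∈ M) = {sel (g v)} := by
      intro v; ext e
      simp only [mem_filter, mem_univ, true_and, hM, mem_image, mem_singleton]
      constructor
      · rintro ⟨hme, w, -, rfl⟩
        have : f w = v := by rw [← hselm w, hme]
        have hwv : w = g v := by
          apply hfinj; rw [this, hfg]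
        rw [hwv]
      · rintro rfl
        exact ⟨by rw [hselm, hfg], g v, rfl⟩
    have hsplit : ∀ (q : E → V) (v : V), (∀ w, mdeg q w = k + 1) →
        ((univ.filter fun e => q e = v ∧ e ∈ M) = {sel v} ∨
         (univ.filter fun e => q e = v ∧ e ∈ M) = {sel (g v)}) →
        #(univ.filter fun e => (e ∉ M) ∧ q e = v) = k := by
      intro q v hq hone
      have h1 := card_filter_add_card_filter_not
        (s := univ.filter fun e => q e = v) (p := fun e => e ∈ M)
      rw [filter_filter, filter_filter] at h1
      have h2 : #(univ.filter fun e => q e = v ∧ e ∈ M) = 1 := by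
        rcases hone with h | h <;> rw [h, card_singleton]
      have h3 : (univ.filter fun e => q e = v ∧ e ∉ M)
          = univ.filter fun e => (e ∉ M) ∧ q e = v := by
        ext e; simp only [mem_filter]; tauto
      rw [h2, h3] at h1
      have := hq v
      rw [mdeg] at this
      omega
    set E' := {e : E // e ∉ M} with hE'
    have hp' : ∀ v, mdeg (fun x : E' => p x.1) v = k := by
      intro v
      rw [mdeg, card_filter_subtype (fun e => e ∉ M) (fun e => p e = v)]
      exact hsplit p v hp (Or.inl (hMp v))
    have hm' : ∀ v, mdeg (fun x : E' => m x.1) v = k := by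
      intro v
      rw [mdeg, card_filter_subtype (fun e => e ∉ M) (fun e => m e = v)]
      exact hsplit m v hm (Or.inr (hMm v))
    obtain ⟨κ', hκ'⟩ := ih E' (fun x => p x.1) (fun x => m x.1) hp' hm'
    refine ⟨fun e => if h : e ∈ M then Fin.last k else (κ' ⟨e, h⟩).castSucc, ?_⟩
    intro e f hef hshare
    by_cases he : e ∈ M <;> by_cases hf : f ∈ M <;> simp only [he, hf, dif_pos, dif_neg,
      not_false_iff]
    · exfalso
      rw [hM] at he hf
      obtain ⟨v, -, rfl⟩ := mem_image.mp he
      obtain ⟨w, -, rfl⟩ := mem_image.mp hf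
      rcases hshare with h | h
      · rw [hselp, hselp] at h; exact hef (by rw [h])
      · rw [hselm, hselm] at h; exact hef (by rw [hfinj h])
    · exact (Fin.castSucc_lt_last _).ne'
    · exact (Fin.castSucc_lt_last _).ne
    · intro hc
      exact hκ' ⟨e, he⟩ ⟨f, hf⟩ (fun h => hef (congrArg Subtype.val h)) hshare
        (Fin.castSucc_injective _ hc)

/-- König edge coloring: degrees at most `k` on both sides. -/
theorem konigLe (k : ℕ) (E : Type u) [Fintype E] (p m : E → V)
    (hp : ∀ v, mdeg p v ≤ k) (hm : ∀ v, mdeg m v ≤ k) :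
    ∃ κ : E → Fin k, ∀ e f, e ≠ f → (p e = p f ∨ m e = m f) → κ e ≠ κ f := by
  classical
  set Dp := {x : V × Fin k // (x.2 : ℕ) < k - mdeg p x.1} with hDp
  set Dm := {x : V × Fin k // (x.2 : ℕ) < k - mdeg m x.1} with hDm
  have hfiber : ∀ (q : E → V) (_ : ∀ v, mdeg q v ≤ k) (v : V),
      #(univ.filter fun x : {y : V × Fin k // (y.2 : ℕ) < k - mdeg q y.1} => x.1.1 = v)
        = k - mdeg q v := by
    intro q hq v
    rw [card_filter_subtype (fun y : V × Fin k => (y.2:ℕ) < k - mdeg q y.1) (fun y => y.1 = v)]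
    rw [← card_filter_fin_lt k (k - mdeg q v) (Nat.sub_le k _)]
    apply Finset.card_bij (fun x _ => x.2)
    · intro x hx
      simp only [mem_filter, mem_univ, true_and] at hx ⊢
      rw [← hx.2]; exact hx.1
    · intro x hx y hy hxy
      simp only [mem_filter, mem_univ, true_and] at hx hy
      exact Prod.ext (hx.2.trans hy.2.symm) hxy
    · intro i hi
      simp only [mem_filter, mem_univ, true_and] at hi
      exact ⟨(v, i), by simp [hi], rfl⟩
  have hcardD : ∀ (q : E → V) (hq : ∀ v, mdeg q v ≤ k),
      Fintype.card {y : V × Fin k // (y.2 : ℕ) < k - mdeg q y.1} = ∑ v, (k - mdeg q v) := by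
    intro q hq
    rw [← Finset.card_univ, Finset.card_eq_sum_card_fiberwise
      (f := fun x : {y : V × Fin k // (y.2:ℕ) < k - mdeg q y.1} => x.1.1) (t := univ)
      (fun x _ => mem_univ _)]
    exact Finset.sum_congr rfl fun v _ => hfiber q hq v
  have hcards : Fintype.card Dp = Fintype.card Dm := by
    rw [hcardD p hp, hcardD m hm]
    have h1 : ∀ (q : E → V), (∀ v, mdeg q v ≤ k) →
        (∑ v, (k - mdeg q v)) + Fintype.card E = Fintype.card V * k := by
      intro q hq
      rw [← sum_mdeg q, ← Finset.sum_add_distrib]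
      rw [Finset.sum_congr rfl (g := fun _ => k) fun v _ => Nat.sub_add_cancel (hq v)]
      rw [Finset.sum_const, smul_eq_mul, card_univ]
    have := h1 p hp
    have := h1 m hm
    omega
  set σ := Fintype.equivOfCardEq hcards with hσ
  set E' := E ⊕ Dp with hE'
  set p' : E' → V := Sum.elim p (fun d => d.1.1) with hp'def
  set m' : E' → V := Sum.elim m (fun d => (σ d).1.1) with hm'def
  have hp' : ∀ v, mdeg p' v = k := by
    intro v
    rw [mdeg, card_filter_sum']
    have := hfiber p hp v
    rw [show #(univ.filter fun b : Dp => p' (Sum.inr b) = v)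
        = #(univ.filter fun x : Dp => x.1.1 = v) by rfl]
    rw [this]
    rw [show #(univ.filter fun a : E => p' (Sum.inl a) = v)
        = mdeg p v by rfl]
    exact Nat.add_sub_cancel' (hp v)
  have hm' : ∀ v, mdeg m' v = k := by
    intro v
    rw [mdeg, card_filter_sum']
    have hbij : #(univ.filter fun b : Dp => (σ b).1.1 = v)
        = #(univ.filter fun x : Dm => x.1.1 = v) := by
      apply Finset.card_bij (fun x _ => σ x)
      · intro x hx; simp only [mem_filter, mem_univ, true_and] at hx ⊢; exact hx
      · intro x _ y _ h; exact σ.injective h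
      · intro d hd
        simp only [mem_filter, mem_univ, true_and] at hd
        exact ⟨σ.symm d, by simp [hd], by simp⟩
    rw [show #(univ.filter fun b : Dp => m' (Sum.inr b) = v)
        = #(univ.filter fun b : Dp => (σ b).1.1 = v) by rfl]
    rw [hbij, hfiber m hm v]
    rw [show #(univ.filter fun a : E => m' (Sum.inl a) = v) = mdeg m v by rfl]
    exact Nat.add_sub_cancel' (hm v)
  obtain ⟨κ', hκ'⟩ := konigReg k E' p' m' hp' hm'
  refine ⟨fun e => κ' (Sum.inl e), ?_⟩
  intro e f hef hshare
  exact hκ' (Sum.inl e) (Sum.inl f) (fun h => hef (Sum.inl.inj h)) hshare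

end Konig

/-- Balanced orientation: each edge picks a "tail" endpoint so that both tail- and
head-counts at every vertex are at most ⌈degree/2⌉. -/
theorem orient {V E : Type u} [Fintype E] [Fintype V] [DecidableEq V]
    (a b : E → V) (hab : ∀ e, a e ≠ b e) :
    ∃ tl hd : E → V,
      (∀ e, (tl e = a e ∧ hd e = b e) ∨ (tl e = b e ∧ hd e = a e)) ∧
      (∀ v, mdeg tl v + mdeg hd v = mdeg a v + mdeg b v) ∧
      (∀ v, mdeg tl v ≤ (mdeg a v + mdeg b v + 1) / 2) ∧
      (∀ v, mdeg hd v ≤ (mdeg a v + mdeg b v + 1) / 2) := by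
  classical
  set d : V → ℕ := fun v => mdeg a v + mdeg b v with hd_def
  have hsumd : ∑ v, d v = 2 * Fintype.card E := by
    have ha : ∑ v, mdeg a v = Fintype.card E := by
      rw [← Finset.card_univ, Finset.card_eq_sum_card_fiberwise (f := a) (t := univ)
        (fun e _ => mem_univ (a e))]; rfl
    have hb : ∑ v, mdeg b v = Fintype.card E := by
      rw [← Finset.card_univ, Finset.card_eq_sum_card_fiberwise (f := b) (t := univ)
        (fun e _ => mem_univ (b e))]; rfl
    rw [hd_def, Finset.sum_add_distrib, ha, hb]; ring
  set O : Finset V := univ.filter (fun v => d v % 2 = 1) with hO_def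
  have hsum_mod : ∑ v, d v % 2 = #O := by
    rw [hO_def]
    rw [Finset.card_filter]
    apply Finset.sum_congr rfl
    intro v _
    rcases Nat.mod_two_eq_zero_or_one (d v) with h | h <;> simp [h]
  have hOeven : #O % 2 = 0 := by
    have h1 : (∑ v, d v) % 2 = 0 := by omega
    have h2 : (∑ v, d v) % 2 = (∑ v, d v % 2) % 2 := by
      rw [Finset.sum_nat_mod]
    omega
  set q : ℕ := #O / 2 with hq_def
  have hOq : #O = 2 * q := by omega
  set oe : Fin (#O) → V := fun i => (O.equivFin.symm i).1 with hoe_def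
  have hoemem : ∀ i, oe i ∈ O := fun i => (O.equivFin.symm i).2
  have hoeinj : Function.Injective oe := by
    intro i j h
    have := Subtype.ext (p := fun x => x ∈ O) h
    exact O.equivFin.symm.injective this
  have hix1 : ∀ j : Fin q, 2 * (j : ℕ) < #O := by intro j; have := j.2; omega
  have hix2 : ∀ j : Fin q, 2 * (j : ℕ) + 1 < #O := by intro j; have := j.2; omega
  set g1 : Fin q → V := fun j => oe ⟨2 * j, hix1 j⟩ with hg1_def
  set g2 : Fin q → V := fun j => oe ⟨2 * j + 1, hix2 j⟩ with hg2_def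
  have hg1O : ∀ j, g1 j ∈ O := fun j => hoemem _
  have hg2O : ∀ j, g2 j ∈ O := fun j => hoemem _
  have hg12 : ∀ j, g1 j ≠ g2 j := by
    intro j h
    have := hoeinj h
    simp [Fin.ext_iff] at this
  have hgdisj : ∀ j j' : Fin q, j ≠ j' → ({g1 j, g2 j} : Finset V) ∩ {g1 j', g2 j'} = ∅ := by
    intro j j' hjj'
    have hne : ∀ (x y : Fin (#O)), oe x = oe y → x = y := fun x y h => hoeinj h
    rw [Finset.eq_empty_iff_forall_notMem]
    intro v hv
    simp only [mem_inter, mem_insert, mem_singleton] at hv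
    obtain ⟨h1, h2⟩ := hv
    have hj : j = j' := by
      rcases h1 with rfl | rfl <;> rcases h2 with h | h <;>
        · have := hne _ _ h; simp [Fin.ext_iff] at this ⊢; omega
    exact hjj' hj
  set slot : V → Finset (V × ℕ) := fun v => {v} ×ˢ Finset.range ((d v + 1) / 2) with hslot_def
  have hslotcard : ∀ v, #(slot v) = (d v + 1) / 2 := by
    intro v; rw [hslot_def]; simp
  have hslotfst : ∀ v x, x ∈ slot v → x.1 = v := by
    intro v x hx; rw [hslot_def] at hx
    rw [Finset.mem_product] at hx
    simpa using hx.1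
  have hslotdisj : ∀ u v : V, u ≠ v → Disjoint (slot u) (slot v) := by
    intro u v huv
    rw [Finset.disjoint_left]
    intro x hxu hxv
    exact huv ((hslotfst u x hxu).symm.trans (hslotfst v x hxv))
  set t : E ⊕ Fin q → Finset (V × ℕ) :=
    Sum.elim (fun e => slot (a e) ∪ slot (b e)) (fun j => slot (g1 j) ∪ slot (g2 j)) with ht_def
  set w : E ⊕ Fin q → Finset V :=
    Sum.elim (fun e => {a e, b e}) (fun j => {g1 j, g2 j}) with hw_def
  have htw : ∀ i, t i = (w i).biUnion slot := by
    rintro (e | j) <;> · rw [ht_def, hw_def]; simp [Finset.biUnion_insert]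
  -- Hall condition
  have hall : ∀ s : Finset (E ⊕ Fin q), #s ≤ #(s.biUnion t) := by
    intro s
    set W : Finset V := s.biUnion w with hW_def
    have hWT : s.biUnion t = W.biUnion slot := by
      ext x
      simp only [mem_biUnion, hW_def]
      constructor
      · rintro ⟨i, hi, hx⟩
        rw [htw i] at hx
        obtain ⟨v, hv, hx⟩ := mem_biUnion.mp hx
        exact ⟨v, ⟨i, hi, hv⟩, hx⟩
      · rintro ⟨v, ⟨i, hi, hv⟩, hx⟩
        exact ⟨i, hi, (htw i) ▸ mem_biUnion.mpr ⟨v, hv, hx⟩⟩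
    have hcardBi : #(W.biUnion slot) = ∑ v ∈ W, (d v + 1) / 2 := by
      rw [Finset.card_biUnion (fun u _ v _ huv => hslotdisj u v huv)]
      exact Finset.sum_congr rfl fun v _ => hslotcard v
    set sE : Finset E := s.toLeft with hsE_def
    set sD : Finset (Fin q) := s.toRight with hsD_def
    have hscard : #s = #sE + #sD := (Finset.card_toLeft_add_card_toRight (u := s)).symm
    -- part A
    have hmemW_a : ∀ e ∈ sE, a e ∈ W := by
      intro e he
      rw [hW_def]
      exact mem_biUnion.mpr ⟨Sum.inl e, Finset.mem_toLeft.mp he, by rw [hw_def]; simp⟩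
    have hmemW_b : ∀ e ∈ sE, b e ∈ W := by
      intro e he
      rw [hW_def]
      exact mem_biUnion.mpr ⟨Sum.inl e, Finset.mem_toLeft.mp he, by rw [hw_def]; simp⟩
    have hpartA : 2 * #sE ≤ ∑ v ∈ W, d v := by
      have hA1 : #sE = ∑ v ∈ W, #(sE.filter fun e => a e = v) :=
        Finset.card_eq_sum_card_fiberwise hmemW_a
      have hA2 : #sE = ∑ v ∈ W, #(sE.filter fun e => b e = v) :=
        Finset.card_eq_sum_card_fiberwise hmemW_b
      have hle : ∀ v ∈ W, #(sE.filter fun e => a e = v) + #(sE.filter fun e => b e = v) ≤ d v := by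
        intro v _
        rw [hd_def]
        exact Nat.add_le_add
          (card_le_card (by intro e he; simp at he ⊢; exact he.2))
          (card_le_card (by intro e he; simp at he ⊢; exact he.2))
      calc 2 * #sE = ∑ v ∈ W, (#(sE.filter fun e => a e = v) + #(sE.filter fun e => b e = v)) := by
            rw [Finset.sum_add_distrib, ← hA1, ← hA2]; ring
        _ ≤ ∑ v ∈ W, d v := Finset.sum_le_sum hle
    -- part B
    have hpartB : 2 * #sD ≤ ∑ v ∈ W, d v % 2 := by
      set PV : Finset V := sD.biUnion (fun j => {g1 j, g2 j}) with hPV_def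
      have hPVsub : PV ⊆ W := by
        intro v hv
        rw [hPV_def] at hv
        obtain ⟨j, hj, hv⟩ := mem_biUnion.mp hv
        rw [hW_def]
        exact mem_biUnion.mpr ⟨Sum.inr j, Finset.mem_toRight.mp hj, by rw [hw_def]; simpa using hv⟩
      have hPVcard : #PV = 2 * #sD := by
        rw [hPV_def, Finset.card_biUnion]
        · rw [Finset.sum_congr rfl (g := fun _ => 2) (fun j _ => ?_), Finset.sum_const,
            smul_eq_mul]
          · ring
          · rw [Finset.card_insert_of_notMem (by simp [hg12 j]), card_singleton]
        · intro j _ j' _ hjj'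
          rw [Function.onFun, Finset.disjoint_iff_inter_eq_empty]
          exact hgdisj j j' hjj'
      have hPVodd : ∀ v ∈ PV, d v % 2 = 1 := by
        intro v hv
        rw [hPV_def] at hv
        obtain ⟨j, _, hv⟩ := mem_biUnion.mp hv
        simp only [mem_insert, mem_singleton] at hv
        have hvO : v ∈ O := by rcases hv with rfl | rfl; exacts [hg1O j, hg2O j]
        rw [hO_def] at hvO
        exact (mem_filter.mp hvO).2
      calc 2 * #sD = #PV := hPVcard.symm
        _ = ∑ v ∈ PV, 1 := by simp
        _ = ∑ v ∈ PV, d v % 2 := Finset.sum_congr rfl fun v hv => (hPVodd v hv).symm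
        _ ≤ ∑ v ∈ W, d v % 2 := Finset.sum_le_sum_of_subset_of_nonneg hPVsub
            (fun _ _ _ => Nat.zero_le _)
    -- combine
    have hdouble : ∀ v, 2 * ((d v + 1) / 2) = d v + d v % 2 := by intro v; omega
    have : 2 * #(W.biUnion slot) = ∑ v ∈ W, d v + ∑ v ∈ W, d v % 2 := by
      rw [hcardBi, Finset.mul_sum, Finset.sum_congr rfl (fun v _ => hdouble v),
        Finset.sum_add_distrib]
    rw [hWT]
    omega
  obtain ⟨F, hFinj, hFt⟩ := (Finset.all_card_le_biUnion_card_iff_exists_injective t).mp hall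
  set tl : E → V := fun e => (F (Sum.inl e)).1 with htl_def
  have htlab : ∀ e, tl e = a e ∨ tl e = b e := by
    intro e
    have := hFt (Sum.inl e)
    rw [ht_def] at this
    simp only [Sum.elim_inl, mem_union] at this
    rcases this with h | h
    · exact Or.inl (hslotfst _ _ h)
    · exact Or.inr (hslotfst _ _ h)
  set hd : E → V := fun e => if tl e = a e then b e else a e with hhd_def
  have hspec : ∀ e, (tl e = a e ∧ hd e = b e) ∨ (tl e = b e ∧ hd e = a e) := by
    intro e
    rw [hhd_def]
    by_cases h : tl e = a e
    · exact Or.inl ⟨h, by simp [h]⟩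
    · rcases htlab e with h' | h'
      · exact absurd h' h
      · exact Or.inr ⟨h', by simp [h]⟩
  have hFslot : ∀ e, F (Sum.inl e) ∈ slot (tl e) := by
    intro e
    have := hFt (Sum.inl e)
    rw [ht_def] at this
    simp only [Sum.elim_inl, mem_union] at this
    rcases this with h | h
    · rw [show tl e = a e from hslotfst _ _ h]; exact h
    · rw [show tl e = b e from hslotfst _ _ h]; exact h
  have htlhd : ∀ e, tl e ≠ hd e := by
    intro e
    rcases hspec e with ⟨h1, h2⟩ | ⟨h1, h2⟩
    · rw [h1, h2]; exact hab e
    · rw [h1, h2]; exact (hab e).symm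
  -- partition
  have hpart : ∀ v, mdeg tl v + mdeg hd v = d v := by
    intro v
    have hdisj1 : Disjoint (univ.filter fun e => tl e = v) (univ.filter fun e => hd e = v) := by
      rw [Finset.disjoint_left]
      intro e he1 he2
      simp at he1 he2
      exact htlhd e (he1.trans he2.symm)
    have hdisj2 : Disjoint (univ.filter fun e => a e = v) (univ.filter fun e => b e = v) := by
      rw [Finset.disjoint_left]
      intro e he1 he2
      simp at he1 he2
      exact hab e (he1.trans he2.symm)
    have hun : (univ.filter fun e => tl e = v) ∪ (univ.filter fun e => hd e = v)
        = (univ.filter fun e => a e = v) ∪ (univ.filter fun e => b e = v) := by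
      ext e
      simp only [mem_union, mem_filter, mem_univ, true_and]
      rcases hspec e with ⟨h1, h2⟩ | ⟨h1, h2⟩ <;> rw [h1, h2] <;> tauto
    have := congrArg Finset.card hun
    rwa [card_union_of_disjoint hdisj1, card_union_of_disjoint hdisj2] at this
  -- upper bound on tails
  have htlbound : ∀ v, mdeg tl v ≤ (d v + 1) / 2 := by
    intro v
    rw [mdeg, ← hslotcard v]
    apply Finset.card_le_card_of_injOn (fun e => F (Sum.inl e))
    · intro e he
      simp only [mem_coe, mem_filter, mem_univ, true_and] at he
      rw [← he]
      exact hFslot e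
    · intro e _ f _ h
      exact Sum.inl.inj (hFinj h)
  -- every slot is used
  have hallslots : univ.biUnion slot ⊆ Finset.univ.image F := by
    have hcard1 : #(univ.biUnion slot) = ∑ v, (d v + 1) / 2 := by
      rw [Finset.card_biUnion (fun u _ v _ huv => hslotdisj u v huv)]
      exact Finset.sum_congr rfl fun v _ => hslotcard v
    have hcard2 : 2 * ∑ v, (d v + 1) / 2 = 2 * Fintype.card E + #O := by
      have : ∀ v, 2 * ((d v + 1) / 2) = d v + d v % 2 := by intro v; omega
      rw [Finset.mul_sum, Finset.sum_congr rfl (fun v _ => this v), Finset.sum_add_distrib,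
        hsumd, hsum_mod]
    have hcard3 : #(univ.biUnion slot) = Fintype.card E + q := by omega
    have hsub : Finset.univ.image F ⊆ univ.biUnion slot := by
      intro x hx
      obtain ⟨i, -, rfl⟩ := mem_image.mp hx
      have := hFt i
      rw [htw i] at this
      obtain ⟨v, -, hv⟩ := mem_biUnion.mp this
      exact mem_biUnion.mpr ⟨v, mem_univ v, hv⟩
    have hcard4 : #(Finset.univ.image F) = Fintype.card E + q := by
      rw [Finset.card_image_of_injective _ hFinj, Finset.card_univ, Fintype.card_sum,
        Fintype.card_fin]
    intro x hx
    rwa [← Finset.eq_of_subset_of_card_le hsub (by omega)] at hx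
  -- lower bound on tails
  have htllow : ∀ v, (d v + 1) / 2 ≤ mdeg tl v + d v % 2 := by
    intro v
    have hsub : slot v ⊆
        ((univ.filter fun e => tl e = v).image fun e => F (Sum.inl e)) ∪
        ((univ.filter fun j : Fin q => (F (Sum.inr j)).1 = v).image fun j => F (Sum.inr j)) := by
      intro x hx
      have hx1 : x.1 = v := hslotfst v x hx
      have : x ∈ Finset.univ.image F := hallslots (mem_biUnion.mpr ⟨v, mem_univ v, hx⟩)
      obtain ⟨i, -, rfl⟩ := mem_image.mp this
      rcases i with e | j
      · apply mem_union_left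
        apply mem_image.mpr
        exact ⟨e, mem_filter.mpr ⟨mem_univ e, by rw [htl_def]; exact hx1⟩, rfl⟩
      · apply mem_union_right
        apply mem_image.mpr
        exact ⟨j, mem_filter.mpr ⟨mem_univ j, hx1⟩, rfl⟩
    have hdummy : #(univ.filter fun j : Fin q => (F (Sum.inr j)).1 = v) ≤ d v % 2 := by
      by_cases hvO : v ∈ O
      · -- at most one
        have : ∀ j ∈ (univ.filter fun j : Fin q => (F (Sum.inr j)).1 = v),
            ∀ j' ∈ (univ.filter fun j : Fin q => (F (Sum.inr j)).1 = v), j = j' := by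
          intro j hj j' hj'
          simp only [mem_filter, mem_univ, true_and] at hj hj'
          have hj2 : v = g1 j ∨ v = g2 j := by
            have := hFt (Sum.inr j)
            rw [ht_def] at this
            simp only [Sum.elim_inr, mem_union] at this
            rcases this with h | h
            · exact Or.inl (hj ▸ (hslotfst _ _ h).symm ▸ rfl)
            · exact Or.inr (hj ▸ (hslotfst _ _ h).symm ▸ rfl)
          have hj'2 : v = g1 j' ∨ v = g2 j' := by
            have := hFt (Sum.inr j')
            rw [ht_def] at this
            simp only [Sum.elim_inr, mem_union] at this
            rcases this with h | h
            · exact Or.inl (hj' ▸ (hslotfst _ _ h).symm ▸ rfl)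
            · exact Or.inr (hj' ▸ (hslotfst _ _ h).symm ▸ rfl)
          rcases hj2 with h1 | h1 <;> rcases hj'2 with h2 | h2 <;>
          · have := hoeinj (h1.symm.trans h2)
            simp [Fin.ext_iff] at this ⊢
            omega
        have h1 : #(univ.filter fun j : Fin q => (F (Sum.inr j)).1 = v) ≤ 1 :=
          Finset.card_le_one.mpr fun i hi j hj => this i hi j hj
        have h2 : d v % 2 = 1 := (mem_filter.mp hvO).2
        omega
      · have : (univ.filter fun j : Fin q => (F (Sum.inr j)).1 = v) = ∅ := by
          rw [Finset.eq_empty_iff_forall_notMem]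
          intro j hj
          simp only [mem_filter, mem_univ, true_and] at hj
          have := hFt (Sum.inr j)
          rw [ht_def] at this
          simp only [Sum.elim_inr, mem_union] at this
          apply hvO
          rcases this with h | h
          · rw [← hj, hslotfst _ _ h]; exact hg1O j
          · rw [← hj, hslotfst _ _ h]; exact hg2O j
        rw [this]
        simp
    calc (d v + 1) / 2 = #(slot v) := (hslotcard v).symm
      _ ≤ #(((univ.filter fun e => tl e = v).image fun e => F (Sum.inl e)) ∪
          ((univ.filter fun j : Fin q => (F (Sum.inr j)).1 = v).image fun j => F (Sum.inr j))) :=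
        card_le_card hsub
      _ ≤ #((univ.filter fun e => tl e = v).image fun e => F (Sum.inl e)) +
          #((univ.filter fun j : Fin q => (F (Sum.inr j)).1 = v).image fun j => F (Sum.inr j)) :=
        card_union_le _ _
      _ ≤ mdeg tl v + d v % 2 :=
        Nat.add_le_add (le_trans (card_image_le) (le_refl _)) (le_trans card_image_le hdummy)
  refine ⟨tl, hd, hspec, fun v => hpart v, fun v => htlbound v, fun v => ?_⟩
  have h1 := hpart v
  have h2 := htlbound v
  have h3 := htllow v
  have hdv : d v = mdeg a v + mdeg b v := rfl
  omega


theorem cyclic_palette (P : Finset (Fin 6))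
    (hcard : P.card = 1 ∨ P.card = 2 ∨ P.card = 4 ∨ P.card = 5 ∨ P.card = 6)
    (hblocks : (P.card = 2 ∨ P.card = 4) → ∀ t : Fin 3,
      #(P.filter (fun i : Fin 6 => (i : ℕ) / 2 = (t : ℕ))) ≠ 1) :
    ∃ s : Fin 6, (s : ℕ) + P.card ≤ 10 ∧
      ∀ i : Fin 6, i ∈ P ↔ ∃ j : Fin 6, (j : ℕ) < P.card ∧ (i : ℕ) = ((s : ℕ) + (j : ℕ)) % 6 := by
  revert hcard hblocks; revert P; decide


section MainConstruction
variable {V E : Type u} [Fintype V] [DecidableEq V] [Fintype E]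

set_option maxHeartbeats 1600000 in
theorem abstract_main (xe ye : E → V)
    (hsep : ∀ e e', xe e ≠ ye e')
    (hdeg : ∀ v, mdeg xe v + mdeg ye v ≤ 6)
    (hdx3 : ∀ v, mdeg xe v ≠ 3) :
    ∃ c : E → ℕ,
      (∀ e f, e ≠ f → (xe e = xe f ∨ ye e = ye f) → c e ≠ c f) ∧
      (∀ e, c e < 10) ∧
      (∀ v, ∃ s : ℕ, ∀ n : ℕ, (∃ e, xe e = v ∧ c e = n) ↔ (s ≤ n ∧ n < s + mdeg xe v)) := by
  classical
  rcases isEmpty_or_nonempty E with hE | hE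
  · refine ⟨fun _ => 0, fun e => isEmptyElim e, fun e => isEmptyElim e, fun v => ⟨0, fun n => ?_⟩⟩
    have hdx0 : mdeg xe v = 0 := by
      rw [mdeg, card_eq_zero, Finset.eq_empty_iff_forall_notMem]
      intro e
      exact isEmptyElim e
    constructor
    · rintro ⟨e, -, -⟩
      exact isEmptyElim e
    · rintro ⟨h1, h2⟩
      omega
  obtain ⟨tl, hd, hspec, hpart, htlb, hhdb⟩ := orient xe ye (fun e => hsep e e)
  have hdy0 : ∀ v, 0 < mdeg xe v → mdeg ye v = 0 := by
    intro v hv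
    by_contra h
    rw [mdeg, card_pos] at hv
    obtain ⟨e, he⟩ := hv
    have h' : 0 < mdeg ye v := Nat.pos_of_ne_zero h
    rw [mdeg, card_pos] at h'
    obtain ⟨f, hf⟩ := h'
    simp only [mem_filter, mem_univ, true_and] at he hf
    exact hsep e f (he.trans hf.symm)
  have hnem : ∀ e v, ye e = v → mdeg ye v ≠ 0 := by
    intro e v h h0
    rw [mdeg, card_eq_zero] at h0
    exact absurd (h0 ▸ mem_filter.mpr ⟨mem_univ e, h⟩) (notMem_empty e)
  have htlxy : ∀ e v, tl e = v → xe e = v ∨ ye e = v := by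
    intro e v h
    rcases hspec e with ⟨h1, _⟩ | ⟨h1, _⟩
    · exact Or.inl (by rw [← h1, h])
    · exact Or.inr (by rw [← h1, h])
  have hhdxy : ∀ e v, hd e = v → xe e = v ∨ ye e = v := by
    intro e v h
    rcases hspec e with ⟨_, h2⟩ | ⟨_, h2⟩
    · exact Or.inr (by rw [← h2, h])
    · exact Or.inl (by rw [← h2, h])
  have hxetlhd : ∀ e v, xe e = v → tl e = v ∨ hd e = v := by
    intro e v h
    rcases hspec e with ⟨h1, _⟩ | ⟨_, h2⟩
    · exact Or.inl (by rw [h1, h])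
    · exact Or.inr (by rw [h2, h])
  have htlhdne : ∀ e, tl e ≠ hd e := by
    intro e h
    rcases hspec e with ⟨h1, h2⟩ | ⟨h1, h2⟩
    · exact hsep e e (by rw [← h1, ← h2, h])
    · exact hsep e e (by rw [← h1, ← h2, ← h])
  have htlxe : ∀ e v, 0 < mdeg xe v → tl e = v → xe e = v := by
    intro e v hv h
    rcases htlxy e v h with h' | h'
    · exact h'
    · exact absurd (hdy0 v hv) (hnem e v h')
  have hhdxe : ∀ e v, 0 < mdeg xe v → hd e = v → xe e = v := by
    intro e v hv h
    rcases hhdxy e v h with h' | h'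
    · exact h'
    · exact absurd (hdy0 v hv) (hnem e v h')
  have hpart2 : ∀ (w : V) (pred : E → Prop) [DecidablePred pred],
      #(univ.filter fun e => xe e = w ∧ pred e) + #(univ.filter fun e => ye e = w ∧ pred e)
      = #(univ.filter fun e => tl e = w ∧ pred e) + #(univ.filter fun e => hd e = w ∧ pred e) := by
    intro w pred _
    have hd1 : Disjoint (univ.filter fun e => xe e = w ∧ pred e)
        (univ.filter fun e => ye e = w ∧ pred e) := by
      rw [Finset.disjoint_left]
      intro e h1 h2
      simp only [mem_filter, mem_univ, true_and] at h1 h2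
      exact hsep e e (h1.1.trans h2.1.symm)
    have hd2 : Disjoint (univ.filter fun e => tl e = w ∧ pred e)
        (univ.filter fun e => hd e = w ∧ pred e) := by
      rw [Finset.disjoint_left]
      intro e h1 h2
      simp only [mem_filter, mem_univ, true_and] at h1 h2
      exact htlhdne e (h1.1.trans h2.1.symm)
    have hun : (univ.filter fun e => xe e = w ∧ pred e) ∪ (univ.filter fun e => ye e = w ∧ pred e)
        = (univ.filter fun e => tl e = w ∧ pred e) ∪ (univ.filter fun e => hd e = w ∧ pred e) := by
      ext e
      simp only [mem_union, mem_filter, mem_univ, true_and]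
      constructor
      · rintro (⟨h, hp⟩ | ⟨h, hp⟩)
        · rcases hxetlhd e w h with h' | h'
          exacts [Or.inl ⟨h', hp⟩, Or.inr ⟨h', hp⟩]
        · rcases hspec e with ⟨h1, h2⟩ | ⟨h1, h2⟩
          · exact Or.inr ⟨by rw [h2, h], hp⟩
          · exact Or.inl ⟨by rw [h1, h], hp⟩
      · rintro (⟨h, hp⟩ | ⟨h, hp⟩)
        · rcases htlxy e w h with h' | h'
          exacts [Or.inl ⟨h', hp⟩, Or.inr ⟨h', hp⟩]
        · rcases hhdxy e w h with h' | h'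
          exacts [Or.inl ⟨h', hp⟩, Or.inr ⟨h', hp⟩]
    have := congrArg Finset.card hun
    rwa [card_union_of_disjoint hd1, card_union_of_disjoint hd2] at this
  -- suppressed vertices
  have hsupp : ∀ v, ∃ p : E × E, mdeg xe v = 2 →
      ((univ.filter fun e => hd e = v) = {p.1} ∧ (univ.filter fun e => tl e = v) = {p.2}) := by
    intro v
    by_cases h2 : mdeg xe v = 2
    swap
    · exact ⟨(Classical.arbitrary E, Classical.arbitrary E), fun h => absurd h h2⟩
    have hdy : mdeg ye v = 0 := hdy0 v (by omega)
    have hsum : mdeg tl v + mdeg hd v = 2 := by rw [hpart v, h2, hdy]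
    have h1 : mdeg tl v ≤ 1 := by have := htlb v; rw [h2, hdy] at this; omega
    have h2' : mdeg hd v ≤ 1 := by have := hhdb v; rw [h2, hdy] at this; omega
    have htl1 : mdeg tl v = 1 := by omega
    have hhd1 : mdeg hd v = 1 := by omega
    obtain ⟨ei, hei⟩ := Finset.card_eq_one.mp hhd1
    obtain ⟨eo, heo⟩ := Finset.card_eq_one.mp htl1
    exact ⟨(ei, eo), fun _ => ⟨hei, heo⟩⟩
  choose pfun hprops using hsupp
  set eIn : V → E := fun v => (pfun v).1 with heIn_def
  set eOut : V → E := fun v => (pfun v).2 with heOut_def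
  have hIn : ∀ v, mdeg xe v = 2 → (univ.filter fun e => hd e = v) = {eIn v} :=
    fun v h => (hprops v h).1
  have hOut : ∀ v, mdeg xe v = 2 → (univ.filter fun e => tl e = v) = {eOut v} :=
    fun v h => (hprops v h).2
  have hInhd : ∀ v, mdeg xe v = 2 → hd (eIn v) = v := by
    intro v h2
    have h' : eIn v ∈ univ.filter fun e => hd e = v := by
      rw [hIn v h2]; exact mem_singleton_self _
    exact (mem_filter.mp h').2
  have hOuttl : ∀ v, mdeg xe v = 2 → tl (eOut v) = v := by
    intro v h2
    have h' : eOut v ∈ univ.filter fun e => tl e = v := by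
      rw [hOut v h2]; exact mem_singleton_self _
    exact (mem_filter.mp h').2
  have hInxe : ∀ v, mdeg xe v = 2 → xe (eIn v) = v := fun v h2 =>
    hhdxe _ v (by omega) (hInhd v h2)
  have hOutxe : ∀ v, mdeg xe v = 2 → xe (eOut v) = v := fun v h2 =>
    htlxe _ v (by omega) (hOuttl v h2)
  have hInuniq : ∀ v e, mdeg xe v = 2 → hd e = v → e = eIn v := by
    intro v e h2 he
    have h' : e ∈ univ.filter fun e => hd e = v := mem_filter.mpr ⟨mem_univ e, he⟩
    rw [hIn v h2] at h'
    exact mem_singleton.mp h'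
  have hOutuniq : ∀ v e, mdeg xe v = 2 → tl e = v → e = eOut v := by
    intro v e h2 he
    have h' : e ∈ univ.filter fun e => tl e = v := mem_filter.mpr ⟨mem_univ e, he⟩
    rw [hOut v h2] at h'
    exact mem_singleton.mp h'
  have hsuppedges : ∀ v e, mdeg xe v = 2 → xe e = v → e = eIn v ∨ e = eOut v := by
    intro v e h2 he
    rcases hxetlhd e v he with h | h
    · exact Or.inr (hOutuniq v e h2 h)
    · exact Or.inl (hInuniq v e h2 h)
  -- the auxiliary bipartite multigraph
  set SX := {v : V // mdeg xe v = 2} with hSX_def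
  set D4 := {v : V // mdeg xe v = 4} with hD4_def
  set E' := {e : E // mdeg xe (xe e) ≠ 2} with hE'_def
  set bp : (E' ⊕ (SX ⊕ D4)) → V :=
    Sum.elim (fun e => tl e.1) (Sum.elim (fun x => tl (eIn x.1)) (fun x => x.1)) with hbp_def
  set bm : (E' ⊕ (SX ⊕ D4)) → V :=
    Sum.elim (fun e => hd e.1) (Sum.elim (fun x => hd (eOut x.1)) (fun x => x.1)) with hbm_def
  have hgadcount : ∀ w : V, #(univ.filter fun x : D4 => x.1 = w) ≤ 1 := by
    intro w
    apply Finset.card_le_one.mpr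
    intro x hx y hy
    simp only [mem_filter, mem_univ, true_and] at hx hy
    exact Subtype.ext (hx.trans hy.symm)
  have hgadcount0 : ∀ w : V, mdeg xe w ≠ 4 → #(univ.filter fun x : D4 => x.1 = w) = 0 := by
    intro w hw
    rw [card_eq_zero, Finset.eq_empty_iff_forall_notMem]
    intro x hx
    simp only [mem_filter, mem_univ, true_and] at hx
    exact hw (hx ▸ x.2)
  have hmain_inj : ∀ (w : V) (zf : E → V) (een : V → E)
      (_ : ∀ v, mdeg xe v = 2 → xe (een v) = v),
      #(univ.filter fun e : E' => zf e.1 = w) + #(univ.filter fun x : SX => zf (een x.1) = w)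
        ≤ mdeg zf w := by
    intro w zf een heenxe
    have h1 : #(univ.filter fun e : E' => zf e.1 = w)
        = #((univ.filter fun e : E' => zf e.1 = w).image (fun e => e.1)) := by
      rw [Finset.card_image_of_injOn (fun e _ f _ h => Subtype.ext h)]
    have h2 : #(univ.filter fun x : SX => zf (een x.1) = w)
        = #((univ.filter fun x : SX => zf (een x.1) = w).image (fun x => een x.1)) :=
      (Finset.card_image_of_injOn (fun x _ y _ h => Subtype.ext
        (by rw [← heenxe x.1 x.2, ← heenxe y.1 y.2, h]))).symm
    have hdisj : Disjoint ((univ.filter fun e : E' => zf e.1 = w).image (fun e => e.1))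
        ((univ.filter fun x : SX => zf (een x.1) = w).image (fun x => een x.1)) := by
      rw [Finset.disjoint_left]
      intro e he1 he2
      obtain ⟨e', _, rfl⟩ := mem_image.mp he1
      obtain ⟨x, _, hx2⟩ := mem_image.mp he2
      apply e'.2
      rw [← hx2, heenxe x.1 x.2, x.2]
    have hsub : ((univ.filter fun e : E' => zf e.1 = w).image (fun e => e.1))
        ∪ ((univ.filter fun x : SX => zf (een x.1) = w).image (fun x => een x.1))
        ⊆ univ.filter fun e => zf e = w := by
      intro e he
      rcases mem_union.mp he with h | h
      · obtain ⟨e', he', rfl⟩ := mem_image.mp h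
        simp only [mem_filter, mem_univ, true_and] at he' ⊢
        exact he'
      · obtain ⟨x, hx, rfl⟩ := mem_image.mp h
        simp only [mem_filter, mem_univ, true_and] at hx ⊢
        exact hx
    calc #(univ.filter fun e : E' => zf e.1 = w) + #(univ.filter fun x : SX => zf (een x.1) = w)
        = #(((univ.filter fun e : E' => zf e.1 = w).image (fun e => e.1))
          ∪ ((univ.filter fun x : SX => zf (een x.1) = w).image (fun x => een x.1))) := by
          rw [card_union_of_disjoint hdisj, ← h1, ← h2]
      _ ≤ mdeg zf w := card_le_card hsub
  have hsplitB : ∀ (w : V) (zz : (E' ⊕ (SX ⊕ D4)) → V),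
      mdeg zz w = #(univ.filter fun e : E' => zz (Sum.inl e) = w)
        + (#(univ.filter fun x : SX => zz (Sum.inr (Sum.inl x)) = w)
          + #(univ.filter fun x : D4 => zz (Sum.inr (Sum.inr x)) = w)) := by
    intro w zz
    rw [mdeg, card_filter_sum' (fun z : E' ⊕ (SX ⊕ D4) => zz z = w),
      card_filter_sum' (fun z : SX ⊕ D4 => zz (Sum.inr z) = w)]
  have hbp3 : ∀ w, mdeg bp w ≤ 3 := by
    intro w
    rw [hsplitB w bp]
    have hinj := hmain_inj w tl eIn hInxe
    by_cases h4 : mdeg xe w = 4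
    · have htl2 : mdeg tl w ≤ 2 := by
        have := htlb w
        rw [h4, hdy0 w (by omega)] at this
        omega
      have := hgadcount w
      simp only [hbp_def, Sum.elim_inl, Sum.elim_inr]
      omega
    · have htl3 : mdeg tl w ≤ 3 := le_trans (htlb w) (by have := hdeg w; omega)
      have := hgadcount0 w h4
      simp only [hbp_def, Sum.elim_inl, Sum.elim_inr]
      omega
  have hbm3 : ∀ w, mdeg bm w ≤ 3 := by
    intro w
    rw [hsplitB w bm]
    have hinj := hmain_inj w hd eOut hOutxe
    by_cases h4 : mdeg xe w = 4
    · have hhd2 : mdeg hd w ≤ 2 := by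
        have := hhdb w
        rw [h4, hdy0 w (by omega)] at this
        omega
      have := hgadcount w
      simp only [hbm_def, Sum.elim_inl, Sum.elim_inr]
      omega
    · have hhd3 : mdeg hd w ≤ 3 := le_trans (hhdb w) (by have := hdeg w; omega)
      have := hgadcount0 w h4
      simp only [hbm_def, Sum.elim_inl, Sum.elim_inr]
      omega
  obtain ⟨κB, hκB⟩ := konigLe 3 (E' ⊕ (SX ⊕ D4)) bp bm hbp3 hbm3
  -- the block coloring
  set β : E → (E' ⊕ (SX ⊕ D4)) := fun e =>
    if h : mdeg xe (xe e) = 2 then Sum.inr (Sum.inl ⟨xe e, h⟩) else Sum.inl ⟨e, h⟩ with hβ_def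
  set tcol : E → Fin 3 := fun e => κB (β e) with htcol_def
  have hβpos : ∀ e (h : mdeg xe (xe e) = 2), β e = Sum.inr (Sum.inl ⟨xe e, h⟩) :=
    fun e h => dif_pos h
  have hβneg : ∀ e (h : ¬ mdeg xe (xe e) = 2), β e = Sum.inl ⟨e, h⟩ := fun e h => dif_neg h
  have hβnotgad : ∀ e (x : D4), β e ≠ Sum.inr (Sum.inr x) := by
    intro e x h
    by_cases h2 : mdeg xe (xe e) = 2
    · rw [hβpos e h2] at h
      simp at h
    · rw [hβneg e h2] at h
      simp at h
  have hβeq : ∀ e f, β e = β f → e = f ∨ (mdeg xe (xe e) = 2 ∧ xe e = xe f) := by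
    intro e f h
    by_cases h2 : mdeg xe (xe e) = 2 <;> by_cases h2' : mdeg xe (xe f) = 2
    · rw [hβpos e h2, hβpos f h2'] at h
      have := congrArg Subtype.val (Sum.inl.inj (Sum.inr.inj h))
      exact Or.inr ⟨h2, this⟩
    · rw [hβpos e h2, hβneg f h2'] at h
      simp at h
    · rw [hβneg e h2, hβpos f h2'] at h
      simp at h
    · rw [hβneg e h2, hβneg f h2'] at h
      exact Or.inl (congrArg Subtype.val (Sum.inl.inj h))
  -- bp β compatibility at tails
  have hK2 : ∀ e w, tl e = w → mdeg xe w ≠ 2 → bp (β e) = w := by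
    intro e w htlw hw2
    by_cases h2 : mdeg xe (xe e) = 2
    · rcases hsuppedges (xe e) e h2 rfl with hIn' | hOut'
      · rw [hβpos e h2]
        simp only [hbp_def, Sum.elim_inr, Sum.elim_inl]
        rw [← hIn', htlw]
      · exfalso
        apply hw2
        rw [← htlw, hOut', hOuttl (xe e) h2]
        exact h2
    · rw [hβneg e h2]
      simp only [hbp_def, Sum.elim_inl]
      exact htlw
  have hK3 : ∀ e w, hd e = w → mdeg xe w ≠ 2 → bm (β e) = w := by
    intro e w hhdw hw2
    by_cases h2 : mdeg xe (xe e) = 2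
    · rcases hsuppedges (xe e) e h2 rfl with hIn' | hOut'
      · exfalso
        apply hw2
        rw [← hhdw, hIn', hInhd (xe e) h2]
        exact h2
      · rw [hβpos e h2]
        simp only [hbm_def, Sum.elim_inr, Sum.elim_inl]
        rw [← hOut', hhdw]
    · rw [hβneg e h2]
      simp only [hbm_def, Sum.elim_inl]
      exact hhdw
  -- at most one tail (resp. head) of each color at an unsuppressed vertex
  have hA_tl : ∀ w t0, mdeg xe w ≠ 2 →
      #(univ.filter fun e => tl e = w ∧ tcol e = t0) ≤ 1 := by
    intro w t0 hw2
    apply Finset.card_le_one.mpr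
    intro e he f hf
    simp only [mem_filter, mem_univ, true_and] at he hf
    by_contra hef
    have hbpe := hK2 e w he.1 hw2
    have hbpf := hK2 f w hf.1 hw2
    by_cases hββ : β e = β f
    · rcases hβeq e f hββ with h | ⟨h2, hxef⟩
      · exact hef h
      · -- both edges of a suppressed vertex xe e; tails equal w
        rcases hsuppedges (xe e) e h2 rfl with hIn' | hOut'
        · rcases hsuppedges (xe e) f h2 (by rw [← hxef]) with hIn'' | hOut''
          · exact hef (hIn'.trans hIn''.symm)
          · apply hw2
            rw [← hf.1, hOut'', hOuttl (xe e) h2]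
            exact h2
        · apply hw2
          rw [← he.1, hOut', hOuttl (xe e) h2]
          exact h2
    · exact hκB (β e) (β f) hββ (Or.inl (hbpe.trans hbpf.symm)) (he.2.trans hf.2.symm)
  have hA_hd : ∀ w t0, mdeg xe w ≠ 2 →
      #(univ.filter fun e => hd e = w ∧ tcol e = t0) ≤ 1 := by
    intro w t0 hw2
    apply Finset.card_le_one.mpr
    intro e he f hf
    simp only [mem_filter, mem_univ, true_and] at he hf
    by_contra hef
    have hbpe := hK3 e w he.1 hw2
    have hbpf := hK3 f w hf.1 hw2
    by_cases hββ : β e = β f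
    · rcases hβeq e f hββ with h | ⟨h2, hxef⟩
      · exact hef h
      · rcases hsuppedges (xe e) e h2 rfl with hIn' | hOut'
        · apply hw2
          rw [← he.1, hIn', hInhd (xe e) h2]
          exact h2
        · rcases hsuppedges (xe e) f h2 (by rw [← hxef]) with hIn'' | hOut''
          · apply hw2
            rw [← hf.1, hIn'', hInhd (xe e) h2]
            exact h2
          · exact hef (hOut'.trans hOut''.symm)
    · exact hκB (β e) (β f) hββ (Or.inr (hbpe.trans hbpf.symm)) (he.2.trans hf.2.symm)
  -- the key degree bound for each block
  have hF2 : ∀ w t0, #(univ.filter fun e => xe e = w ∧ tcol e = t0)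
      + #(univ.filter fun e => ye e = w ∧ tcol e = t0) ≤ 2 := by
    intro w t0
    by_cases hw2 : mdeg xe w = 2
    · have h1 : #(univ.filter fun e => xe e = w ∧ tcol e = t0) ≤ 2 := by
        rw [← hw2, mdeg]
        apply card_le_card
        intro e he
        simp only [mem_filter, mem_univ, true_and] at he ⊢
        exact he.1
      have h2 : #(univ.filter fun e => ye e = w ∧ tcol e = t0) = 0 := by
        rw [card_eq_zero, Finset.eq_empty_iff_forall_notMem]
        intro e he
        simp only [mem_filter, mem_univ, true_and] at he
        exact hnem e w he.1 (hdy0 w (by omega))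
      omega
    · have hp2 := hpart2 w (fun e => tcol e = t0)
      have := hA_tl w t0 hw2
      have := hA_hd w t0 hw2
      omega
  -- degree-2 vertices: both edges in the same block
  have hB2 : ∀ w, mdeg xe w = 2 → ∀ e f, xe e = w → xe f = w → tcol e = tcol f := by
    intro w h2 e f he hf
    have h2e : mdeg xe (xe e) = 2 := by rw [he]; exact h2
    have h2f : mdeg xe (xe f) = 2 := by rw [hf]; exact h2
    have hββ : β e = β f := by
      rw [hβpos e h2e, hβpos f h2f]
      exact congrArg Sum.inr (congrArg Sum.inl (Subtype.ext (he.trans hf.symm)))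
    show κB (β e) = κB (β f)
    rw [hββ]
  -- degree-4 vertices: no block has exactly one edge
  have hC4 : ∀ w, mdeg xe w = 4 → ∀ t0,
      #(univ.filter fun e => xe e = w ∧ tcol e = t0) ≠ 1 := by
    intro w h4 t0
    have hw2 : mdeg xe w ≠ 2 := by omega
    have hdyw : mdeg ye w = 0 := hdy0 w (by omega)
    have htlw2 : mdeg tl w = 2 := by
      have h1 := htlb w
      have h2 := hhdb w
      have h3 := hpart w
      rw [h4, hdyw] at h1 h2 h3
      omega
    have hhdw2 : mdeg hd w = 2 := by
      have h1 := htlb w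
      have h3 := hpart w
      rw [h4, hdyw] at h1 h3
      omega
    set gad : (E' ⊕ (SX ⊕ D4)) := Sum.inr (Sum.inr ⟨w, h4⟩) with hgad_def
    set a : Fin 3 := κB gad with ha_def
    have htail_ne_a : ∀ e, tl e = w → tcol e ≠ a := by
      intro e he
      have hbpe := hK2 e w he hw2
      exact hκB (β e) gad (hβnotgad e _) (Or.inl (by rw [hbpe]; rfl))
    have hhead_ne_a : ∀ e, hd e = w → tcol e ≠ a := by
      intro e he
      have hbme := hK3 e w he hw2
      exact hκB (β e) gad (hβnotgad e _) (Or.inr (by rw [hbme]; rfl))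
    have htcol_distinct : ∀ e f, e ≠ f → tl e = w → tl f = w → tcol e ≠ tcol f := by
      intro e f hef he hf hc
      have h1 : #(univ.filter fun e' => tl e' = w ∧ tcol e' = tcol e) ≤ 1 := hA_tl w _ hw2
      rw [Finset.card_le_one] at h1
      exact hef (h1 e (by simp [he]) f (by simp [hf, ← hc]))
    have hhcol_distinct : ∀ e f, e ≠ f → hd e = w → hd f = w → tcol e ≠ tcol f := by
      intro e f hef he hf hc
      have h1 : #(univ.filter fun e' => hd e' = w ∧ tcol e' = tcol e) ≤ 1 := hA_hd w _ hw2
      rw [Finset.card_le_one] at h1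
      exact hef (h1 e (by simp [he]) f (by simp [hf, ← hc]))
    have hcnt : ∀ (zf : E → V), mdeg zf w = 2 → (∀ e, zf e = w → tcol e ≠ a) →
        (∀ e f, e ≠ f → zf e = w → zf f = w → tcol e ≠ tcol f) →
        (∀ t0', #(univ.filter fun e => zf e = w ∧ tcol e = t0') ≤ 1) →
        ∀ t0', t0' ≠ a → #(univ.filter fun e => zf e = w ∧ tcol e = t0') = 1 := by
      intro zf hzf2 hne_a hdist hle1 t0' ht0a
      rcases Nat.lt_or_ge #(univ.filter fun e => zf e = w ∧ tcol e = t0') 1 with h | h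
      · exfalso
        have hempty : ∀ e, zf e = w → tcol e ≠ t0' := by
          intro e he hc
          have : e ∈ univ.filter fun e => zf e = w ∧ tcol e = t0' := by simp [he, hc]
          rw [Nat.lt_one_iff, card_eq_zero] at h
          rw [h] at this
          exact notMem_empty e this
        obtain ⟨e1, e2, hne, hpair⟩ := Finset.card_eq_two.mp hzf2
        have he1 : zf e1 = w := by
          have : e1 ∈ univ.filter fun e => zf e = w := by rw [hpair]; simp
          exact (mem_filter.mp this).2
        have he2 : zf e2 = w := by
          have : e2 ∈ univ.filter fun e => zf e = w := by rw [hpair]; simp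
          exact (mem_filter.mp this).2
        have hsub : ({tcol e1, tcol e2} : Finset (Fin 3)) ⊆ (univ \ {t0', a}) := by
          intro i hi
          simp only [mem_insert, mem_singleton] at hi
          rw [mem_sdiff]
          refine ⟨mem_univ i, ?_⟩
          simp only [mem_insert, mem_singleton]
          push_neg
          rcases hi with rfl | rfl
          · exact ⟨hempty e1 he1, hne_a e1 he1⟩
          · exact ⟨hempty e2 he2, hne_a e2 he2⟩
        have hcard2 : #({tcol e1, tcol e2} : Finset (Fin 3)) = 2 := by
          rw [card_insert_of_notMem (by simp [hdist e1 e2 hne he1 he2]), card_singleton]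
        have hcard1 : #((univ : Finset (Fin 3)) \ {t0', a}) = 1 := by
          rw [card_sdiff_of_subset (by intro i hi; exact mem_univ i)]
          rw [card_insert_of_notMem (by simp [ht0a]), card_singleton]
          simp
        have := card_le_card hsub
        omega
      · exact le_antisymm (hle1 t0') h
    have htails := hcnt tl htlw2 htail_ne_a htcol_distinct (fun t0' => hA_tl w t0' hw2)
    have hheads := hcnt hd hhdw2 hhead_ne_a hhcol_distinct (fun t0' => hA_hd w t0' hw2)
    have htails_a : #(univ.filter fun e => tl e = w ∧ tcol e = a) = 0 := by
      rw [card_eq_zero, Finset.eq_empty_iff_forall_notMem]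
      intro e he
      simp only [mem_filter, mem_univ, true_and] at he
      exact htail_ne_a e he.1 he.2
    have hheads_a : #(univ.filter fun e => hd e = w ∧ tcol e = a) = 0 := by
      rw [card_eq_zero, Finset.eq_empty_iff_forall_notMem]
      intro e he
      simp only [mem_filter, mem_univ, true_and] at he
      exact hhead_ne_a e he.1 he.2
    have hye0 : #(univ.filter fun e => ye e = w ∧ tcol e = t0) = 0 := by
      rw [card_eq_zero, Finset.eq_empty_iff_forall_notMem]
      intro e he
      simp only [mem_filter, mem_univ, true_and] at he
      exact hnem e w he.1 hdyw
    have hsum := hpart2 w (fun e => tcol e = t0)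
    by_cases ht0a : t0 = a
    · subst ht0a
      omega
    · have ht1 := htails t0 ht0a
      have ht2 := hheads t0 ht0a
      omega
  -- 2-colorings within each block
  have hjt : ∀ t0 : Fin 3, ∃ κ : E → Fin 2, ∀ e f, e ≠ f → tcol e = t0 → tcol f = t0 →
      (xe e = xe f ∨ ye e = ye f) → κ e ≠ κ f := by
    intro t0
    have hpbound : ∀ v, mdeg (fun z : {e : E // tcol e = t0} => xe z.1) v ≤ 2 := by
      intro v
      rw [mdeg, card_filter_subtype (fun e => tcol e = t0) (fun e => xe e = v)]
      have h1 : (univ.filter fun e => tcol e = t0 ∧ xe e = v)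
          = univ.filter fun e => xe e = v ∧ tcol e = t0 := by
        ext e; simp only [mem_filter]; tauto
      rw [h1]
      have := hF2 v t0
      omega
    have hmbound : ∀ v, mdeg (fun z : {e : E // tcol e = t0} => ye z.1) v ≤ 2 := by
      intro v
      rw [mdeg, card_filter_subtype (fun e => tcol e = t0) (fun e => ye e = v)]
      have h1 : (univ.filter fun e => tcol e = t0 ∧ ye e = v)
          = univ.filter fun e => ye e = v ∧ tcol e = t0 := by
        ext e; simp only [mem_filter]; tauto
      rw [h1]
      have := hF2 v t0
      omega
    obtain ⟨κ', hκ'⟩ := konigLe 2 {e : E // tcol e = t0}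
      (fun z => xe z.1) (fun z => ye z.1) hpbound hmbound
    refine ⟨fun e => if h : tcol e = t0 then κ' ⟨e, h⟩ else 0, ?_⟩
    intro e f hef he hf hshare
    simp only [dif_pos he, dif_pos hf]
    exact hκ' ⟨e, he⟩ ⟨f, hf⟩ (fun h => hef (congrArg Subtype.val h)) hshare
  choose jf hjf using hjt
  set jcol : E → Fin 2 := fun e => jf (tcol e) e with hjcol_def
  set mod6 : E → ℕ := fun e => 2 * (tcol e : ℕ) + (jcol e : ℕ) with hmod6_def
  have hmod6lt : ∀ e, mod6 e < 6 := by
    intro e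
    show 2 * (tcol e : ℕ) + (jcol e : ℕ) < 6
    have h1 : (tcol e : ℕ) < 3 := (tcol e).2
    have h2 : (jcol e : ℕ) < 2 := (jcol e).2
    omega
  have hm6proper : ∀ e f, e ≠ f → (xe e = xe f ∨ ye e = ye f) → mod6 e ≠ mod6 f := by
    intro e f hef hshare
    show 2 * (tcol e : ℕ) + (jcol e : ℕ) ≠ 2 * (tcol f : ℕ) + (jcol f : ℕ)
    by_cases h : tcol e = tcol f
    · have hj : jcol e ≠ jcol f := by
        show jf (tcol e) e ≠ jf (tcol f) f
        rw [h]
        exact hjf (tcol f) e f hef h rfl hshare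
      have hj' : (jcol e : ℕ) ≠ (jcol f : ℕ) := fun hc => hj (Fin.ext hc)
      have ht' : (tcol e : ℕ) = (tcol f : ℕ) := congrArg Fin.val h
      omega
    · have ht' : (tcol e : ℕ) ≠ (tcol f : ℕ) := fun hc => h (Fin.ext hc)
      have h1 : (jcol e : ℕ) < 2 := (jcol e).2
      have h2 : (jcol f : ℕ) < 2 := (jcol f).2
      omega
  have hm6div : ∀ e, mod6 e / 2 = (tcol e : ℕ) := by
    intro e
    show (2 * (tcol e : ℕ) + (jcol e : ℕ)) / 2 = (tcol e : ℕ)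
    have h2 : (jcol e : ℕ) < 2 := (jcol e).2
    omega
  set m6 : E → Fin 6 := fun e => ⟨mod6 e, hmod6lt e⟩ with hm6_def
  have hm6val : ∀ e, (m6 e : ℕ) = mod6 e := fun e => rfl
  set P : V → Finset (Fin 6) := fun v => (univ.filter fun e => xe e = v).image m6 with hP_def
  have hPmem : ∀ v (i : Fin 6), i ∈ P v ↔ ∃ e, xe e = v ∧ m6 e = i := by
    intro v i
    show i ∈ (univ.filter fun e => xe e = v).image m6 ↔ _
    simp only [mem_image, mem_filter, mem_univ, true_and]
  have hPcard : ∀ v, #(P v) = mdeg xe v := by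
    intro v
    show #((univ.filter fun e => xe e = v).image m6) = _
    rw [mdeg]
    apply Finset.card_image_of_injOn
    intro e he f hf hm
    simp only [mem_coe, mem_filter, mem_univ, true_and] at he hf
    by_contra hef
    exact hm6proper e f hef (Or.inl (he.trans hf.symm)) (by
      have := congrArg Fin.val hm
      rwa [hm6val, hm6val] at this)
  have hPblockcard : ∀ v (t0 : Fin 3),
      #((P v).filter fun i : Fin 6 => (i : ℕ) / 2 = (t0 : ℕ))
        = #(univ.filter fun e => xe e = v ∧ tcol e = t0) := by
    intro v t0
    have heq : ((P v).filter fun i : Fin 6 => (i : ℕ) / 2 = (t0 : ℕ))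
        = (univ.filter fun e => xe e = v ∧ tcol e = t0).image m6 := by
      ext i
      constructor
      · intro hi
        obtain ⟨hiP, hdiv⟩ := mem_filter.mp hi
        obtain ⟨e, he, hm6e⟩ := (hPmem v i).mp hiP
        refine mem_image.mpr ⟨e, mem_filter.mpr ⟨mem_univ e, he, ?_⟩, hm6e⟩
        apply Fin.ext
        rw [← hm6div e]
        have : (i : ℕ) / 2 = (t0 : ℕ) := hdiv
        rw [← this, ← hm6e, hm6val]
      · intro hi
        obtain ⟨e, hem, hm6e⟩ := mem_image.mp hi
        obtain ⟨-, he, ht⟩ := mem_filter.mp hem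
        refine mem_filter.mpr ⟨(hPmem v i).mpr ⟨e, he, hm6e⟩, ?_⟩
        show (i : ℕ) / 2 = (t0 : ℕ)
        rw [← hm6e, hm6val, hm6div e, ht]
    rw [heq]
    apply Finset.card_image_of_injOn
    intro e he f hf hm
    simp only [mem_coe, mem_filter, mem_univ, true_and] at he hf
    by_contra hef
    exact hm6proper e f hef (Or.inl (he.1.trans hf.1.symm)) (by
      have := congrArg Fin.val hm
      rwa [hm6val, hm6val] at this)
  -- apply the finite cyclic-interval lemma
  have hEx : ∀ v, 0 < mdeg xe v → ∃ s : Fin 6, (s : ℕ) + #(P v) ≤ 10 ∧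
      ∀ i : Fin 6, i ∈ P v ↔ ∃ jj : Fin 6, (jj : ℕ) < #(P v) ∧
        (i : ℕ) = ((s : ℕ) + (jj : ℕ)) % 6 := by
    intro v hv
    apply cyclic_palette
    · rw [hPcard]
      have h1 : mdeg xe v + mdeg ye v ≤ 6 := hdeg v
      have h2 : mdeg xe v ≠ 3 := hdx3 v
      omega
    · intro hc t0
      rw [hPblockcard v t0]
      rw [hPcard] at hc
      rcases hc with h2 | h4
      · intro hone
        obtain ⟨e0, he0⟩ := Finset.card_eq_one.mp hone
        have he0m : e0 ∈ univ.filter fun e => xe e = v ∧ tcol e = t0 := by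
          rw [he0]; exact mem_singleton_self _
        simp only [mem_filter, mem_univ, true_and] at he0m
        have hall : (univ.filter fun e => xe e = v ∧ tcol e = t0)
            = univ.filter fun e => xe e = v := by
          ext e
          simp only [mem_filter, mem_univ, true_and]
          refine ⟨fun h => h.1, fun h => ⟨h, ?_⟩⟩
          rw [hB2 v h2 e e0 h he0m.1]
          exact he0m.2
        rw [hall] at hone
        rw [← mdeg] at hone
        omega
      · exact hC4 v h4 t0
  choose! sfun hs10 hschar using hEx
  -- the final coloring
  set c : E → ℕ := fun e =>
    if mod6 e < (sfun (xe e) : ℕ) then mod6 e + 6 else mod6 e with hc_def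
  have hcrange : ∀ e, ((sfun (xe e) : ℕ) ≤ mod6 e ∧ c e = mod6 e)
      ∨ (mod6 e < (sfun (xe e) : ℕ) ∧ c e = mod6 e + 6) := by
    intro e
    by_cases h : mod6 e < (sfun (xe e) : ℕ)
    · refine Or.inr ⟨h, ?_⟩
      show (if mod6 e < (sfun (xe e) : ℕ) then mod6 e + 6 else mod6 e) = mod6 e + 6
      rw [if_pos h]
    · refine Or.inl ⟨by omega, ?_⟩
      show (if mod6 e < (sfun (xe e) : ℕ) then mod6 e + 6 else mod6 e) = mod6 e
      rw [if_neg h]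
  have hdxpos : ∀ e, 0 < mdeg xe (xe e) := by
    intro e
    rw [mdeg, card_pos]
    exact ⟨e, mem_filter.mpr ⟨mem_univ e, rfl⟩⟩
  have hm6memP : ∀ e, m6 e ∈ P (xe e) := by
    intro e
    exact (hPmem (xe e) (m6 e)).mpr ⟨e, rfl, rfl⟩
  have hchar_e : ∀ e, ∃ jj : Fin 6, (jj : ℕ) < mdeg xe (xe e) ∧
      mod6 e = ((sfun (xe e) : ℕ) + (jj : ℕ)) % 6 := by
    intro e
    have h := (hschar (xe e) (hdxpos e) (m6 e)).mp (hm6memP e)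
    obtain ⟨jj, hjj, heq⟩ := h
    rw [hPcard] at hjj
    exact ⟨jj, hjj, heq⟩
  refine ⟨c, ?_, ?_, ?_⟩
  · -- properness
    intro e f hef hshare
    have hm := hm6proper e f hef hshare
    have h1 := hmod6lt e
    have h2 := hmod6lt f
    rcases hcrange e with ⟨he1, he2⟩ | ⟨he1, he2⟩ <;>
      rcases hcrange f with ⟨hf1, hf2⟩ | ⟨hf1, hf2⟩ <;> omega
  · -- bound
    intro e
    obtain ⟨jj, hjj, heq⟩ := hchar_e e
    have hs := hs10 (xe e) (hdxpos e)
    rw [hPcard] at hs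
    have hslt : (sfun (xe e) : ℕ) < 6 := (sfun (xe e)).2
    have hjlt : (jj : ℕ) < 6 := jj.2
    have h6 := hmod6lt e
    rcases hcrange e with ⟨he1, he2⟩ | ⟨he1, he2⟩ <;> omega
  · -- palettes are intervals
    intro v
    by_cases hv : 0 < mdeg xe v
    · refine ⟨(sfun v : ℕ), fun n => ?_⟩
      have hs := hs10 v hv
      rw [hPcard] at hs
      have hslt : (sfun v : ℕ) < 6 := (sfun v).2
      have hdle : mdeg xe v ≤ 6 := by have := hdeg v; omega
      constructor
      · rintro ⟨e, hxe, hce⟩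
        obtain ⟨jj, hjj, heq⟩ := hchar_e e
        rw [hxe] at heq hjj
        have hjlt : (jj : ℕ) < 6 := jj.2
        have h6 := hmod6lt e
        rcases hcrange e with ⟨he1, he2⟩ | ⟨he1, he2⟩ <;> rw [hxe] at he1 <;> omega
      · rintro ⟨hn1, hn2⟩
        have hjlt : n - (sfun v : ℕ) < 6 := by omega
        have hjj2 : (n - (sfun v : ℕ)) < #(P v) := by rw [hPcard]; omega
        have hiP : (⟨((sfun v : ℕ) + (n - (sfun v : ℕ))) % 6,
            Nat.mod_lt _ (by norm_num)⟩ : Fin 6) ∈ P v :=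
          (hschar v hv _).mpr ⟨⟨n - (sfun v : ℕ), hjlt⟩, hjj2, rfl⟩
        obtain ⟨e, hxe, hm6e⟩ := (hPmem v _).mp hiP
        have hmod : mod6 e = ((sfun v : ℕ) + (n - (sfun v : ℕ))) % 6 := congrArg Fin.val hm6e
        refine ⟨e, hxe, ?_⟩
        have h6 := hmod6lt e
        rcases hcrange e with ⟨he1, he2⟩ | ⟨he1, he2⟩ <;> rw [hxe] at he1 <;> omega
    · refine ⟨0, fun n => ?_⟩
      have hv0 : mdeg xe v = 0 := by omega
      constructor
      · rintro ⟨e, hxe, -⟩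
        exfalso
        rw [mdeg, card_eq_zero] at hv0
        exact absurd (hv0 ▸ mem_filter.mpr ⟨mem_univ e, hxe⟩) (notMem_empty e)
      · rintro ⟨h1, h2⟩
        omega

end MainConstruction





/-- `X` is one part of a bipartition of `G`: every edge joins `X` and its complement. -/
def IsBipartition {V : Type*} (G : SimpleGraph V) (X : Set V) : Prop :=
  ∀ v w, G.Adj v w → (v ∈ X ↔ w ∉ X)

/-- A proper edge coloring: distinct edges sharing a vertex get distinct colors. -/
def IsProperEdgeColoring {V : Type*} (G : SimpleGraph V) (c : G.edgeSet → ℕ) : Prop :=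
  ∀ e f : G.edgeSet, e ≠ f → (∃ v, v ∈ (e : Sym2 V) ∧ v ∈ (f : Sym2 V)) → c e ≠ c f

/-- The palette of a vertex: the set of colors on its incident edges. -/
def palette {V : Type*} (G : SimpleGraph V) (c : G.edgeSet → ℕ) (v : V) : Set ℕ :=
  {n | ∃ e : G.edgeSet, v ∈ (e : Sym2 V) ∧ c e = n}

/-- The coloring is interval at `v`: the palette of `v` is a set of consecutive integers. -/
def IntervalAt {V : Type*} (G : SimpleGraph V) (c : G.edgeSet → ℕ) (v : V) : Prop :=
  ∀ a b m : ℕ, a ∈ palette G c v → b ∈ palette G c v → a ≤ m → m ≤ b →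
    m ∈ palette G c v

/-- If `G = (X, Y; E)` is a bipartite graph with `Δ(G) = 6` in which every vertex of `X`
has degree in `{1, 2, 4, 5, 6}`, then `χ'_int(G, X) ≤ 10`: `G` has an `X`-interval
coloring using at most `10` colors. -/
theorem X_interval_coloring_ten_colors {V : Type*} [Fintype V] [DecidableEq V]
    (G : SimpleGraph V) [DecidableRel G.Adj] (X : Set V)
    (hbip : IsBipartition G X)
    (hΔ : G.maxDegree = 6)
    (hX : ∀ x ∈ X, G.degree x ∈ ({1, 2, 4, 5, 6} : Set ℕ)) :
    ∃ c : G.edgeSet → ℕ, IsProperEdgeColoring G c ∧ (∀ e, c e < 10) ∧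
      ∀ x ∈ X, IntervalAt G c x := by
  classical
  -- extract endpoint functions
  have hends : ∀ e : G.edgeSet, ∃ p : V × V,
      (e : Sym2 V) = s(p.1, p.2) ∧ p.1 ∈ X ∧ p.2 ∉ X ∧ G.Adj p.1 p.2 := by
    rintro ⟨e, he⟩
    induction e with
    | _ u v =>
      have hadj : G.Adj u v := he
      by_cases hu : u ∈ X
      · exact ⟨(u, v), rfl, hu, (hbip u v hadj).mp hu, hadj⟩
      · have hv : v ∈ X := by
          by_contra hv
          exact hu ((hbip u v hadj).mpr hv)
        refine ⟨(v, u), Sym2.eq_swap, hv, ?_, hadj.symm⟩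
        intro hu'
        exact hu hu'
  choose pe hpe1 hpe2 hpe3 hpe4 using hends
  set xe : G.edgeSet → V := fun e => (pe e).1 with hxe_def
  set ye : G.edgeSet → V := fun e => (pe e).2 with hye_def
  have hxeX : ∀ e, xe e ∈ X := hpe2
  have hyeX : ∀ e, ye e ∉ X := hpe3
  have hsep : ∀ e e', xe e ≠ ye e' := by
    intro e e' h
    exact hyeX e' (h ▸ hxeX e)
  have hmem : ∀ (e : G.edgeSet) (v : V), v ∈ (e : Sym2 V) ↔ (xe e = v ∨ ye e = v) := by
    intro e v
    rw [hpe1 e, Sym2.mem_iff]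
    constructor
    · rintro (rfl | rfl)
      exacts [Or.inl rfl, Or.inr rfl]
    · rintro (rfl | rfl)
      exacts [Or.inl rfl, Or.inr rfl]
  -- degree counting
  have hdegcount : ∀ v : V, mdeg xe v + mdeg ye v = G.degree v := by
    intro v
    have h1 : #(univ.filter fun e : G.edgeSet => v ∈ (e : Sym2 V))
        = G.degree v := by
      rw [← G.card_incidenceFinset_eq_degree v]
      refine Finset.card_nbij (i := fun e => (e : Sym2 V)) ?_ ?_ ?_
      · intro e he
        simp only [mem_coe, mem_filter, mem_univ, true_and] at he
        rw [mem_coe, SimpleGraph.mem_incidenceFinset]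
        exact ⟨e.2, he⟩
      · intro e _ f _ h
        exact Subtype.ext h
      · intro s hs
        simp only [mem_coe, SimpleGraph.mem_incidenceFinset] at hs
        exact ⟨⟨s, hs.1⟩, by simp only [mem_coe, mem_filter, mem_univ, true_and]; exact hs.2, rfl⟩
    rw [← h1]
    have hsplit : (univ.filter fun e : G.edgeSet => v ∈ (e : Sym2 V))
        = (univ.filter fun e => xe e = v) ∪ (univ.filter fun e => ye e = v) := by
      ext e
      simp only [mem_filter, mem_univ, true_and, mem_union]
      exact hmem e v
    rw [hsplit, card_union_of_disjoint, mdeg, mdeg]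
    rw [Finset.disjoint_left]
    intro e h1' h2'
    simp only [mem_filter, mem_univ, true_and] at h1' h2'
    exact hsep e e (h1'.trans h2'.symm)
  have hdeg6 : ∀ v : V, G.degree v ≤ 6 := by
    intro v
    rw [← hΔ]
    exact G.degree_le_maxDegree v
  have hxe0 : ∀ v, v ∉ X → mdeg xe v = 0 := by
    intro v hv
    rw [mdeg, card_eq_zero, Finset.eq_empty_iff_forall_notMem]
    intro e he
    simp only [mem_filter, mem_univ, true_and] at he
    exact hv (he ▸ hxeX e)
  have hye0 : ∀ v, v ∈ X → mdeg ye v = 0 := by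
    intro v hv
    rw [mdeg, card_eq_zero, Finset.eq_empty_iff_forall_notMem]
    intro e he
    simp only [mem_filter, mem_univ, true_and] at he
    exact hyeX e (he ▸ hv)
  obtain ⟨c, hproper, hbound, hpal⟩ := abstract_main xe ye hsep
    (fun v => by rw [hdegcount v]; exact hdeg6 v)
    (by
      intro v
      by_cases hv : v ∈ X
      · have h := hX v hv
        simp only [Set.mem_insert_iff, Set.mem_singleton_iff] at h
        have hd : mdeg xe v = G.degree v := by
          have := hdegcount v
          rw [hye0 v hv] at this
          omega
        omega
      · rw [hxe0 v hv]
        omega)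
  refine ⟨c, ?_, hbound, ?_⟩
  · -- properness
    intro e f hef ⟨v, hv1, hv2⟩
    apply hproper e f hef
    rw [hmem e v] at hv1
    rw [hmem f v] at hv2
    rcases hv1 with h1 | h1 <;> rcases hv2 with h2 | h2
    · exact Or.inl (h1.trans h2.symm)
    · exact absurd (h1 ▸ hxeX e) (h2 ▸ hyeX f)
    · exact absurd (h2 ▸ hxeX f) (h1 ▸ hyeX e)
    · exact Or.inr (h1.trans h2.symm)
  · -- intervals
    intro x hx
    obtain ⟨s, hs⟩ := hpal x
    have hpx : ∀ n, n ∈ palette G c x ↔ (s ≤ n ∧ n < s + mdeg xe x) := by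
      intro n
      rw [← hs n]
      constructor
      · rintro ⟨e, hv, hc⟩
        rw [hmem e x] at hv
        rcases hv with h | h
        · exact ⟨e, h, hc⟩
        · exact absurd (h ▸ hx) (hyeX e)
      · rintro ⟨e, hv, hc⟩
        exact ⟨e, (hmem e x).mpr (Or.inl hv), hc⟩
    intro a b m ha hb hab hmb
    rw [hpx] at ha hb ⊢
    omega
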